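/- Let D be a graded division algebra, V a finite-dimensional graded right D-module with graded flag F : 0 = V_0 ⊂ V_1 ⊂ ⋯ ⊂ V_r = V, and R = End_D F. Then for each i, every R-module endomorphism f of V_i (V_i viewed as a left R-module) is given by right multiplication by some element d ∈ D; i.e., End_R V_i ≅ D. -/

import Mathlib

open MulOpposite

/-- A grading of a ring `D` by a group `G`. -/
structure RingGrading (G D : Type*) [Group G] [DecidableEq G] [Ring D] where
  comp : G → AddSubgroup D
  decomp : DirectSum.Decomposition comp
  mul_mem : ∀ {g h : G} {a b : D}, a ∈ comp g → b ∈ comp h → a * b ∈ comp (g * h)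
  one_mem : (1 : D) ∈ comp 1

/-- A graded ring is a graded division ring if every nonzero homogeneous element
is invertible. -/
def RingGrading.IsDivision {G D : Type*} [Group G] [DecidableEq G] [Ring D]
    (𝒟 : RingGrading G D) : Prop :=
  ∀ (g : G) (a : D), a ∈ 𝒟.comp g → a ≠ 0 → IsUnit a

/-- A grading of a right `D`-module `V` (modelled as a `Dᵐᵒᵖ`-module) compatible with
the grading `𝒟` of `D`. -/
structure ModuleGrading (G : Type*) [Group G] [DecidableEq G] {D : Type*} [Ring D]
    (𝒟 : RingGrading G D) (V : Type*) [AddCommGroup V] [Module Dᵐᵒᵖ V] where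
  comp : G → AddSubgroup V
  decomp : DirectSum.Decomposition comp
  smul_mem : ∀ {g h : G} {v : V} {d : D}, v ∈ comp g → d ∈ 𝒟.comp h → (op d) • v ∈ comp (g * h)

variable {G : Type*} [Group G] [DecidableEq G] {D : Type*} [Ring D] {𝒟 : RingGrading G D}
  {V : Type*} [AddCommGroup V] [Module Dᵐᵒᵖ V]

/-- A `D`-submodule `W` is homogeneous if it is the (direct) sum of its intersections
with the homogeneous components. -/
def ModuleGrading.IsHomog (𝒱 : ModuleGrading G 𝒟 V) (W : Submodule Dᵐᵒᵖ V) : Prop :=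
  W.toAddSubgroup = ⨆ g : G, (W.toAddSubgroup ⊓ 𝒱.comp g)

/-- A graded flag `0 = V₀ ⊂ V₁ ⊂ ⋯ ⊂ V_r = V` of homogeneous `D`-submodules of `V`
(the chain is constant equal to `⊤` from index `r` on). -/
structure GradedFlag (𝒱 : ModuleGrading G 𝒟 V) (r : ℕ) where
  mem : ℕ → Submodule Dᵐᵒᵖ V
  bot : mem 0 = ⊥
  strict : ∀ i < r, mem i < mem (i + 1)
  stable : ∀ i, r ≤ i → mem i = ⊤
  homog : ∀ i, 𝒱.IsHomog (mem i)

/-- The ring `End_D 𝓕` of `D`-linear endomorphisms of `V` preserving each member of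
the flag `F`, as a subring of `End_D V`. -/
def GradedFlag.flagEnd {𝒱 : ModuleGrading G 𝒟 V} {r : ℕ} (F : GradedFlag 𝒱 r) :
    Subring (Module.End Dᵐᵒᵖ V) where
  carrier := {f | ∀ i, ∀ v ∈ F.mem i, f v ∈ F.mem i}
  zero_mem' := by intro i v hv; simp
  one_mem' := by intro i v hv; simpa using hv
  add_mem' := by
    intro a b ha hb i v hv
    simpa [LinearMap.add_apply] using (F.mem i).add_mem (ha i v hv) (hb i v hv)
  neg_mem' := by
    intro a ha i v hv
    simpa [LinearMap.neg_apply] using (F.mem i).neg_mem (ha i v hv)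
  mul_mem' := by intro a b ha hb i v hv; exact ha i _ (hb i v hv)

/-- The degree-`τ` homogeneous component of `End_D V`: endomorphisms mapping `V_g`
into `V_{τg}` for every `g`. -/
def ModuleGrading.endComp (𝒱 : ModuleGrading G 𝒟 V) (τ : G) :
    AddSubgroup (Module.End Dᵐᵒᵖ V) where
  carrier := {f | ∀ (g : G), ∀ v ∈ 𝒱.comp g, f v ∈ 𝒱.comp (τ * g)}
  zero_mem' := by intro g v hv; simpa using (𝒱.comp _).zero_mem
  add_mem' := by
    intro a b ha hb g v hv
    simpa [LinearMap.add_apply] using (𝒱.comp _).add_mem (ha g v hv) (hb g v hv)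
  neg_mem' := by
    intro a ha g v hv
    simpa [LinearMap.neg_apply] using (𝒱.comp _).neg_mem (ha g v hv)

-- ===================== Auxiliary machinery =====================

/-- The homogeneous component of a ring element. -/
noncomputable def RingGrading.component (𝒟 : RingGrading G D) (c : D) (h : G) : D :=
  letI := 𝒟.decomp
  (DirectSum.decompose 𝒟.comp c h : D)

theorem RingGrading.component_mem (𝒟 : RingGrading G D) (c : D) (h : G) :
    𝒟.component c h ∈ 𝒟.comp h := by
  letI := 𝒟.decomp
  exact SetLike.coe_mem _

theorem RingGrading.component_sum (𝒟 : RingGrading G D) (c : D) :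
    ∃ s : Finset G, ∑ h ∈ s, 𝒟.component c h = c := by
  letI := 𝒟.decomp
  haveI : ∀ (i : G) (x : 𝒟.comp i), Decidable (x ≠ 0) := fun _ _ => Classical.dec _
  exact ⟨(DirectSum.decompose 𝒟.comp c).support, DirectSum.sum_support_decompose 𝒟.comp c⟩

theorem RingGrading.exists_component_ne_zero (𝒟 : RingGrading G D) {c : D} (hc : c ≠ 0) :
    ∃ h : G, 𝒟.component c h ≠ 0 := by
  by_contra hall
  push_neg at hall
  obtain ⟨s, hs⟩ := 𝒟.component_sum c
  exact hc (by rw [← hs]; exact Finset.sum_eq_zero fun h _ => hall h)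

/-- The homogeneous component of a module element. -/
noncomputable def ModuleGrading.component (𝒱 : ModuleGrading G 𝒟 V) (v : V) (g : G) : V :=
  letI := 𝒱.decomp
  (DirectSum.decompose 𝒱.comp v g : V)

theorem ModuleGrading.component_mem (𝒱 : ModuleGrading G 𝒟 V) (v : V) (g : G) :
    𝒱.component v g ∈ 𝒱.comp g := by
  letI := 𝒱.decomp
  exact SetLike.coe_mem _

theorem ModuleGrading.component_of_mem_same (𝒱 : ModuleGrading G 𝒟 V) {v : V} {g : G}
    (h : v ∈ 𝒱.comp g) : 𝒱.component v g = v := by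
  letI := 𝒱.decomp
  exact DirectSum.decompose_of_mem_same _ h

theorem ModuleGrading.component_of_mem_ne (𝒱 : ModuleGrading G 𝒟 V) {v : V} {g g' : G}
    (h : v ∈ 𝒱.comp g) (hne : g ≠ g') : 𝒱.component v g' = 0 := by
  letI := 𝒱.decomp
  exact DirectSum.decompose_of_mem_ne _ h hne

theorem ModuleGrading.component_zero (𝒱 : ModuleGrading G 𝒟 V) (g : G) :
    𝒱.component 0 g = 0 := by
  letI := 𝒱.decomp
  show ((DirectSum.decompose 𝒱.comp (0 : V)) g : V) = 0
  rw [DirectSum.decompose_zero]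
  simp

theorem ModuleGrading.component_add (𝒱 : ModuleGrading G 𝒟 V) (v w : V) (g : G) :
    𝒱.component (v + w) g = 𝒱.component v g + 𝒱.component w g := by
  letI := 𝒱.decomp
  show ((DirectSum.decompose 𝒱.comp (v + w)) g : V) = _
  rw [DirectSum.decompose_add]
  simp [ModuleGrading.component]

theorem ModuleGrading.component_neg (𝒱 : ModuleGrading G 𝒟 V) (v : V) (g : G) :
    𝒱.component (-v) g = -𝒱.component v g := by
  have h := 𝒱.component_add v (-v) g
  rw [add_neg_cancel, 𝒱.component_zero] at h
  exact eq_neg_of_add_eq_zero_right h.symm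

theorem ModuleGrading.component_sum' (𝒱 : ModuleGrading G 𝒟 V) (v : V) :
    ∃ s : Finset G, ∑ g ∈ s, 𝒱.component v g = v := by
  letI := 𝒱.decomp
  haveI : ∀ (i : G) (x : 𝒱.comp i), Decidable (x ≠ 0) := fun _ _ => Classical.dec _
  exact ⟨(DirectSum.decompose 𝒱.comp v).support, DirectSum.sum_support_decompose 𝒱.comp v⟩

/-- Key computation: the components of a right scalar multiple of a homogeneous element. -/
theorem ModuleGrading.component_smul (𝒱 : ModuleGrading G 𝒟 V) {x : V} {g : G}
    (hx : x ∈ 𝒱.comp g) (c : D) (h : G) :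
    𝒱.component (op c • x) (g * h) = op (𝒟.component c h) • x := by
  letI := 𝒟.decomp
  letI := 𝒱.decomp
  revert c
  refine DirectSum.Decomposition.inductionOn 𝒟.comp ?_ ?_ ?_
  · rw [op_zero, zero_smul]
    rw [show 𝒟.component 0 h = 0 from by
      show ((DirectSum.decompose 𝒟.comp (0 : D)) h : D) = 0
      rw [DirectSum.decompose_zero]; simp]
    rw [op_zero, zero_smul]
    exact 𝒱.component_zero _
  · intro i m
    by_cases hih : i = h
    · subst hih
      have h1 : 𝒟.component (m : D) i = m := by
        show ((DirectSum.decompose 𝒟.comp (m : D)) i : D) = m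
        rw [DirectSum.decompose_of_mem_same _ m.2]
      rw [h1]
      exact 𝒱.component_of_mem_same (𝒱.smul_mem hx m.2)
    · have h1 : 𝒟.component (m : D) h = 0 := by
        show ((DirectSum.decompose 𝒟.comp (m : D)) h : D) = 0
        rw [DirectSum.decompose_of_mem_ne _ m.2 hih]
      rw [h1, op_zero, zero_smul]
      exact 𝒱.component_of_mem_ne (𝒱.smul_mem hx m.2)
        (fun hgg => hih (mul_left_cancel hgg))
  · intro a b ha hb
    have h1 : 𝒟.component (a + b) h = 𝒟.component a h + 𝒟.component b h := by
      show ((DirectSum.decompose 𝒟.comp (a + b)) h : D) = _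
      rw [DirectSum.decompose_add]
      rfl
    rw [op_add, add_smul, 𝒱.component_add, ha, hb, h1, op_add, add_smul]

/-- Component-wise homogeneity of a submodule. -/
def ModuleGrading.Homog (𝒱 : ModuleGrading G 𝒟 V) (M : Submodule Dᵐᵒᵖ V) : Prop :=
  ∀ v ∈ M, ∀ g : G, 𝒱.component v g ∈ M

theorem ModuleGrading.homog_of_isHomog (𝒱 : ModuleGrading G 𝒟 V) {M : Submodule Dᵐᵒᵖ V}
    (hM : 𝒱.IsHomog M) : 𝒱.Homog M := by
  intro v hv g
  have hv' : v ∈ (⨆ g : G, (M.toAddSubgroup ⊓ 𝒱.comp g)) := by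
    rw [← hM]; exact hv
  let K : AddSubgroup V :=
    { carrier := {w | ∀ g : G, 𝒱.component w g ∈ M}
      add_mem' := fun ha hb g => by
        rw [𝒱.component_add]; exact M.add_mem (ha g) (hb g)
      zero_mem' := fun g => by rw [𝒱.component_zero]; exact M.zero_mem
      neg_mem' := fun ha g => by rw [𝒱.component_neg]; exact M.neg_mem (ha g) }
  have hle : (⨆ g : G, (M.toAddSubgroup ⊓ 𝒱.comp g)) ≤ K := by
    refine iSup_le fun h w hw => ?_
    obtain ⟨hwM, hwh⟩ := AddSubgroup.mem_inf.mp hw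
    intro g
    by_cases hgh : h = g
    · subst hgh; rw [𝒱.component_of_mem_same hwh]; exact hwM
    · rw [𝒱.component_of_mem_ne hwh hgh]; exact M.zero_mem
  exact hle hv' g

theorem ModuleGrading.homog_bot (𝒱 : ModuleGrading G 𝒟 V) :
    𝒱.Homog (⊥ : Submodule Dᵐᵒᵖ V) := by
  intro v hv g
  rw [Submodule.mem_bot] at hv
  subst hv
  rw [𝒱.component_zero]
  exact Submodule.zero_mem _

theorem ModuleGrading.homog_sup (𝒱 : ModuleGrading G 𝒟 V) {M N : Submodule Dᵐᵒᵖ V}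
    (hM : 𝒱.Homog M) (hN : 𝒱.Homog N) : 𝒱.Homog (M ⊔ N) := by
  intro v hv g
  obtain ⟨y, hy, z, hz, rfl⟩ := Submodule.mem_sup.mp hv
  rw [𝒱.component_add]
  exact Submodule.add_mem _ (Submodule.mem_sup_left (hM y hy g))
    (Submodule.mem_sup_right (hN z hz g))

theorem ModuleGrading.homog_span (𝒱 : ModuleGrading G 𝒟 V) {x : V} {g : G}
    (hx : x ∈ 𝒱.comp g) : 𝒱.Homog (Dᵐᵒᵖ ∙ x) := by
  intro v hv k
  obtain ⟨t, rfl⟩ := Submodule.mem_span_singleton.mp hv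
  rw [show t • x = op t.unop • x from by rw [op_unop]]
  rw [show k = g * (g⁻¹ * k) from by group]
  rw [𝒱.component_smul hx]
  exact Submodule.mem_span_singleton.mpr ⟨op (𝒟.component t.unop (g⁻¹ * k)), rfl⟩

/-- If a nonzero right multiple of a homogeneous element lies in a homogeneous
submodule, so does the element itself. -/
theorem ModuleGrading.mem_of_smul_mem (hdiv : 𝒟.IsDivision) (𝒱 : ModuleGrading G 𝒟 V)
    {M : Submodule Dᵐᵒᵖ V} (hM : 𝒱.Homog M) {x : V} {g : G} (hx : x ∈ 𝒱.comp g)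
    {c : D} (hc : op c • x ∈ M) (hne : c ≠ 0) : x ∈ M := by
  obtain ⟨h, hh⟩ := 𝒟.exists_component_ne_zero hne
  have h1 : op (𝒟.component c h) • x ∈ M := by
    have := hM _ hc (g * h)
    rwa [𝒱.component_smul hx] at this
  obtain ⟨u, hu⟩ := hdiv h _ (𝒟.component_mem c h) hh
  have h2 := M.smul_mem (op ((u⁻¹ : Dˣ) : D)) h1
  rw [smul_smul, ← op_mul, ← hu, Units.mul_inv, op_one, one_smul] at h2
  exact h2

theorem ModuleGrading.disjoint_span (hdiv : 𝒟.IsDivision) (𝒱 : ModuleGrading G 𝒟 V)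
    {M : Submodule Dᵐᵒᵖ V} (hM : 𝒱.Homog M) {x : V} {g : G} (hx : x ∈ 𝒱.comp g)
    (hxM : x ∉ M) : ∀ v ∈ M, v ∈ (Dᵐᵒᵖ ∙ x) → v = 0 := by
  intro v hvM hvs
  obtain ⟨t, rfl⟩ := Submodule.mem_span_singleton.mp hvs
  by_cases ht : t.unop = 0
  · rw [← op_unop t, ht, op_zero, zero_smul]
  · exact absurd (𝒱.mem_of_smul_mem hdiv hM hx
      (by rwa [← op_unop t] at hvM) ht) hxM

theorem ModuleGrading.smul_eq_zero_iff (hdiv : 𝒟.IsDivision) (𝒱 : ModuleGrading G 𝒟 V)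
    {x : V} {g : G} (hx : x ∈ 𝒱.comp g) (hx0 : x ≠ 0) {c : D}
    (hc : op c • x = 0) : c = 0 := by
  by_contra hne
  exact hx0 (Submodule.mem_bot (R := Dᵐᵒᵖ).mp
    (𝒱.mem_of_smul_mem hdiv 𝒱.homog_bot hx
      (by rw [hc]; exact Submodule.zero_mem _) hne))

/-- Every homogeneous submodule of a finite graded module over a graded division ring
has a homogeneous complement. -/
theorem ModuleGrading.exists_homog_compl (hdiv : 𝒟.IsDivision) (𝒱 : ModuleGrading G 𝒟 V)
    [Module.Finite Dᵐᵒᵖ V] {M : Submodule Dᵐᵒᵖ V} (hM : 𝒱.Homog M) :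
    ∃ C : Submodule Dᵐᵒᵖ V, 𝒱.Homog C ∧ IsCompl M C := by
  classical
  have key : ∀ l : List V, (∀ x ∈ l, ∃ g, x ∈ 𝒱.comp g) →
      ∃ C : Submodule Dᵐᵒᵖ V, 𝒱.Homog C ∧ M ⊓ C = ⊥ ∧ ∀ x ∈ l, x ∈ M ⊔ C := by
    intro l
    induction l with
    | nil => exact fun _ => ⟨⊥, 𝒱.homog_bot, by simp, by simp⟩
    | cons x l ih =>
      intro hl
      obtain ⟨C, hC, hdisj, hmem⟩ := ih fun y hy => hl y (List.mem_cons_of_mem _ hy)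
      obtain ⟨g, hg⟩ := hl x (List.mem_cons_self (a := x) (l := l))
      by_cases hx : x ∈ M ⊔ C
      · refine ⟨C, hC, hdisj, fun y hy => ?_⟩
        rcases List.mem_cons.mp hy with rfl | hy
        exacts [hx, hmem y hy]
      · refine ⟨C ⊔ (Dᵐᵒᵖ ∙ x), 𝒱.homog_sup hC (𝒱.homog_span hg), ?_, ?_⟩
        · have hdisj2 := 𝒱.disjoint_span hdiv (𝒱.homog_sup hM hC) hg hx
          rw [eq_bot_iff]
          rintro v hv
          obtain ⟨hvM, hvC'⟩ := Submodule.mem_inf.mp hv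
          obtain ⟨c, hc, sx, hsx, rfl⟩ := Submodule.mem_sup.mp hvC'
          have h1 : sx ∈ M ⊔ C := by
            have : sx = (c + sx) - c := by abel
            rw [this]
            exact Submodule.sub_mem _ (Submodule.mem_sup_left hvM)
              (Submodule.mem_sup_right hc)
          have h2 : sx = 0 := hdisj2 sx h1 hsx
          subst h2
          rw [add_zero] at hvM ⊢
          have : c ∈ M ⊓ C := Submodule.mem_inf.mpr ⟨hvM, hc⟩
          rw [hdisj] at this
          exact this
        · intro y hy
          rcases List.mem_cons.mp hy with rfl | hy
          · exact Submodule.mem_sup_right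
              (Submodule.mem_sup_right (Submodule.mem_span_singleton_self y))
          · exact (sup_le_sup_left le_sup_left M) (hmem y hy)
  obtain ⟨s, hs⟩ : (⊤ : Submodule Dᵐᵒᵖ V).FG := Module.Finite.fg_top
  set l : List V :=
    s.toList.flatMap (fun v => (Classical.choose (𝒱.component_sum' v)).toList.map
      (𝒱.component v)) with hl
  have hlhom : ∀ x ∈ l, ∃ g, x ∈ 𝒱.comp g := by
    intro x hx
    rw [hl, List.mem_flatMap] at hx
    obtain ⟨v, hv, hx⟩ := hx
    obtain ⟨g, _, rfl⟩ := List.mem_map.mp hx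
    exact ⟨g, 𝒱.component_mem v g⟩
  obtain ⟨C, hC, hdisj, hmem⟩ := key l hlhom
  refine ⟨C, hC, ⟨disjoint_iff.mpr hdisj, codisjoint_iff.mpr ?_⟩⟩
  rw [eq_top_iff, ← hs, Submodule.span_le]
  intro v hv
  rw [SetLike.mem_coe]
  have hspec := Classical.choose_spec (𝒱.component_sum' v)
  rw [← hspec]
  refine Submodule.sum_mem _ fun g hg => ?_
  refine hmem _ ?_
  rw [hl, List.mem_flatMap]
  exact ⟨v, Finset.mem_toList.mpr (Finset.mem_coe.mp hv),
    List.mem_map.mpr ⟨g, Finset.mem_toList.mpr hg, rfl⟩⟩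

theorem GradedFlag.mem_mono {𝒱 : ModuleGrading G 𝒟 V} {r : ℕ} (F : GradedFlag 𝒱 r) :
    Monotone F.mem := by
  apply monotone_nat_of_le_succ
  intro n
  rcases lt_or_ge n r with h | h
  · exact (F.strict n h).le
  · rw [F.stable n h, F.stable (n + 1) (le_trans h (Nat.le_succ n))]

/-- every `R`-module endomorphism of `V_i` (where `R = End_D 𝓕`)
is given by right multiplication by some `d ∈ D`, i.e. `End_R V_i ≅ D`. -/
theorem flag_member_R_endomorphism_is_scalar
    (hdiv : 𝒟.IsDivision) [Module.Finite Dᵐᵒᵖ V]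
    {𝒱 : ModuleGrading G 𝒟 V} {r : ℕ} (F : GradedFlag 𝒱 r)
    (i : ℕ) (f : V →+ V)
    (hf1 : ∀ v ∈ F.mem i, f v ∈ F.mem i)
    (hf2 : ∀ a ∈ F.flagEnd, ∀ v ∈ F.mem i, f (a v) = a (f v)) :
    ∃ d : D, ∀ v ∈ F.mem i, f v = (op d) • v := by
  classical
  by_cases hWbot : ∀ v ∈ F.mem i, v = (0 : V)
  · exact ⟨0, fun v hv => by rw [hWbot v hv, map_zero, smul_zero]⟩
  push_neg at hWbot
  obtain ⟨w₀, hw₀W, hw₀0⟩ := hWbot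
  -- the largest flag member not containing `F.mem i`
  set S : Finset ℕ := (Finset.range (i + 1)).filter (fun j => ¬ F.mem i ≤ F.mem j) with hS
  have h0S : (0 : ℕ) ∈ S := by
    rw [hS, Finset.mem_filter, Finset.mem_range]
    refine ⟨by omega, fun hle => ?_⟩
    rw [F.bot] at hle
    exact hw₀0 (Submodule.mem_bot (R := Dᵐᵒᵖ).mp (hle hw₀W))
  have hSne : S.Nonempty := ⟨0, h0S⟩
  set j₀ := S.max' hSne with hj₀
  have hj₀S : j₀ ∈ S := S.max'_mem hSne
  have hNnle : ¬ F.mem i ≤ F.mem j₀ := (Finset.mem_filter.mp hj₀S).2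
  set N := F.mem j₀ with hN
  have hkey : ∀ j, F.mem i ≤ F.mem j ∨ F.mem j ≤ N := by
    intro j
    by_cases h : F.mem i ≤ F.mem j
    · exact Or.inl h
    · right
      have hji : j ≤ i := by
        by_contra hc
        exact h (F.mem_mono (by omega))
      have hjS : j ∈ S := by
        rw [hS, Finset.mem_filter, Finset.mem_range]
        exact ⟨by omega, h⟩
      exact F.mem_mono (S.le_max' j hjS)
  have hNhom : 𝒱.Homog N := 𝒱.homog_of_isHomog (F.homog j₀)
  have hWhom : 𝒱.Homog (F.mem i) := 𝒱.homog_of_isHomog (F.homog i)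
  -- choose a homogeneous `u ∈ F.mem i \ N`
  obtain ⟨w, hwW, hwN⟩ := SetLike.not_le_iff_exists.mp hNnle
  obtain ⟨s, hsum⟩ := 𝒱.component_sum' w
  have hexg : ∃ g ∈ s, 𝒱.component w g ∉ N := by
    by_contra hall
    push_neg at hall
    exact hwN (by rw [← hsum]; exact Submodule.sum_mem _ fun g hg => hall g hg)
  obtain ⟨g, _, huN⟩ := hexg
  set u := 𝒱.component w g with hu
  have hug : u ∈ 𝒱.comp g := 𝒱.component_mem w g
  have huW : u ∈ F.mem i := hWhom w hwW g
  have hu0 : u ≠ 0 := fun h => huN (h ▸ N.zero_mem)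
  -- homogeneous complement of `N ⊔ span u`
  obtain ⟨C, hChom, hCcompl⟩ := 𝒱.exists_homog_compl hdiv
    (𝒱.homog_sup hNhom (𝒱.homog_span hug))
  set P := N ⊔ C with hP
  have hPcompl : IsCompl (Dᵐᵒᵖ ∙ u) P := by
    constructor
    · rw [disjoint_iff, eq_bot_iff]
      rintro v hv
      obtain ⟨hvs, hvP⟩ := Submodule.mem_inf.mp hv
      obtain ⟨n, hn, c, hc, rfl⟩ := Submodule.mem_sup.mp hvP
      have hcmem : c ∈ (N ⊔ (Dᵐᵒᵖ ∙ u)) := by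
        have : c = (n + c) - n := by abel
        rw [this]
        exact Submodule.sub_mem _ (Submodule.mem_sup_right hvs)
          (Submodule.mem_sup_left hn)
      have hc0 : c = 0 := Submodule.disjoint_def.mp hCcompl.disjoint c hcmem hc
      subst hc0
      rw [add_zero] at hvs ⊢
      rw [Submodule.mem_bot]
      exact 𝒱.disjoint_span hdiv hNhom hug huN n hn hvs
    · rw [codisjoint_iff]
      have h1 := codisjoint_iff.mp hCcompl.codisjoint
      rw [← h1, hP, ← sup_assoc, sup_comm (Dᵐᵒᵖ ∙ u) N, sup_assoc, sup_comm (Dᵐᵒᵖ ∙ u) C,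
        ← sup_assoc]
  set π := Submodule.linearProjOfIsCompl _ P hPcompl with hπ
  set σ := LinearMap.toSpanSingleton Dᵐᵒᵖ V u with hσ
  have hσinj : Function.Injective σ := by
    intro a b hab
    have h1 : (a - b) • u = 0 := by
      have : σ a = a • u := rfl
      have hab' : a • u = b • u := hab
      rw [sub_smul, hab', sub_self]
    have h2 : (a - b).unop = 0 := 𝒱.smul_eq_zero_iff hdiv hug hu0 (by rwa [op_unop])
    have h3 : a - b = 0 := unop_injective h2
    exact sub_eq_zero.mp h3
  set ε : (Dᵐᵒᵖ ∙ u) ≃ₗ[Dᵐᵒᵖ] Dᵐᵒᵖ :=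
    (LinearEquiv.ofEq _ _ (LinearMap.span_singleton_eq_range Dᵐᵒᵖ V u)).trans
      (LinearEquiv.ofInjective σ hσinj).symm with hε
  have hεσ : ∀ y : (Dᵐᵒᵖ ∙ u), σ (ε y) = (y : V) := by
    intro y
    have h1 : (LinearEquiv.ofInjective σ hσinj) (ε y) =
        (LinearEquiv.ofEq _ _ (LinearMap.span_singleton_eq_range Dᵐᵒᵖ V u)) y := by
      rw [hε]
      exact LinearEquiv.apply_symm_apply _ _
    have h2 := congrArg Subtype.val h1
    rw [LinearEquiv.ofInjective_apply] at h2
    exact h2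
  set A : V → Module.End Dᵐᵒᵖ V := fun v =>
    (LinearMap.toSpanSingleton Dᵐᵒᵖ V v) ∘ₗ (ε.toLinearMap ∘ₗ (π : V →ₗ[Dᵐᵒᵖ] (Dᵐᵒᵖ ∙ u)))
    with hA
  have hAapp : ∀ v x, A v x = (ε (π x)) • v := fun v x => rfl
  have hAu : ∀ v, A v u = v := by
    intro v
    have humem : u ∈ (Dᵐᵒᵖ ∙ u) := Submodule.mem_span_singleton_self u
    have hπu : π u = ⟨u, humem⟩ :=
      Submodule.linearProjOfIsCompl_apply_left hPcompl ⟨u, humem⟩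
    rw [hAapp, hπu]
    have h1 : σ (ε ⟨u, humem⟩) = u := hεσ _
    have h2 : σ 1 = u := by rw [hσ]; exact LinearMap.toSpanSingleton_apply_one Dᵐᵒᵖ V u
    rw [hσinj (h1.trans h2.symm), one_smul]
  have hAmem : ∀ v ∈ F.mem i, A v ∈ F.flagEnd := by
    intro v hv j x hx
    rcases hkey j with h | h
    · rw [hAapp]
      exact h (Submodule.smul_mem _ _ hv)
    · have hxP : x ∈ P := Submodule.mem_sup_left (h hx)
      rw [hAapp, show π x = 0 from Submodule.linearProjOfIsCompl_apply_right' hPcompl hxP, map_zero,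
        zero_smul]
      exact (F.mem j).zero_mem
  refine ⟨(ε (π (f u))).unop, ?_⟩
  intro v hv
  have h1 : f (A v u) = A v (f u) := hf2 (A v) (hAmem v hv) u huW
  rw [hAu] at h1
  rw [h1, hAapp, op_unop]
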